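/- Let A be a finite commutative ring, s a fixed element of A, e a random element of A drawn from some distribution ψ, a uniform over A and independent of e, and s' uniform over A independent of everything. Then the pair (a, a·s + e + a·s') is distributed as a sample (a, a·(s+s') + e) where s + s' is uniformly distributed over A; i.e., randomizing a fixed-secret sample yields a uniform-secret sample. -/
import Mathlib

lemma uniform_shift (A : Type*) [AddGroup A] [Fintype A] {β : Type*}
    (s : A) (f : A → PMF β) :
    (PMF.uniformOfFintype A).bind (fun s' => f (s + s'))
      = (PMF.uniformOfFintype A).bind f := by
  ext x
  simp only [PMF.bind_apply, PMF.uniformOfFintype_apply]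
  exact (Equiv.addLeft s).tsum_eq fun t => (Fintype.card A : ENNReal)⁻¹ * f t x

/-- worst-case to average-case randomization of the secret: over a finite
commutative ring `A`, with `a` uniform, `e ← ψ`, and `s'` uniform, all independent,
the sample `(a, a·s + e + a·s')` is distributed as `(a, a·t + e)` where the secret
`t = s + s'` is uniform over `A`. -/
theorem stmt_16 (A : Type*) [CommRing A] [Fintype A] [DecidableEq A]
    (ψ : PMF A) (s : A) :
    ((PMF.uniformOfFintype A).bind fun a =>
      ψ.bind fun e =>
        (PMF.uniformOfFintype A).bind fun s' =>
          PMF.pure (a, a * s + e + a * s'))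
    = ((PMF.uniformOfFintype A).bind fun t =>
        (PMF.uniformOfFintype A).bind fun a =>
          ψ.bind fun e =>
            PMF.pure (a, a * t + e)) := by
  calc ((PMF.uniformOfFintype A).bind fun a => ψ.bind fun e =>
        (PMF.uniformOfFintype A).bind fun s' => PMF.pure (a, a * s + e + a * s'))
      = ((PMF.uniformOfFintype A).bind fun a => ψ.bind fun e =>
        (PMF.uniformOfFintype A).bind fun s' => PMF.pure (a, a * (s + s') + e)) := by
        congr 1; funext a; congr 1; funext e; congr 1; funext s'; congr 2; ring
    _ = ((PMF.uniformOfFintype A).bind fun a => ψ.bind fun e =>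
        (PMF.uniformOfFintype A).bind fun t => PMF.pure (a, a * t + e)) := by
        congr 1; funext a; congr 1; funext e
        exact uniform_shift A s fun t => PMF.pure (a, a * t + e)
    _ = ((PMF.uniformOfFintype A).bind fun a =>
        (PMF.uniformOfFintype A).bind fun t =>
          ψ.bind fun e => PMF.pure (a, a * t + e)) := by
        congr 1; funext a
        exact PMF.bind_comm ψ (PMF.uniformOfFintype A) _
    _ = _ := PMF.bind_comm _ _ _
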